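/- Let S be a semigroup that is a finite disjoint union of free monogenic subsemigroups N_a = ⟨a⟩ (a ∈ A), and let ρ be the right congruence defined by (x,y) ∈ ρ iff for all z ∈ S¹ there is a ∈ A with x·z, y·z ∈ N_a. Then ρ has finitely many equivalence classes. -/

import Mathlib

/-- `spow a n` is the `n`-th power of `a` in a semigroup, for `n ≥ 1`
(with the junk value `a` at `n = 0`). -/
def spow {S : Type*} [Semigroup S] (a : S) : ℕ → S
  | 0 => a
  | 1 => a
  | (n + 2) => spow a (n + 1) * a

/-- The subsemigroup (as a set) generated by `a`: all positive powers of `a`. -/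
def Nblock {S : Type*} [Semigroup S] (a : S) : Set S :=
  {x | ∃ i : ℕ, 1 ≤ i ∧ x = spow a i}

/-- The relation ρ: `x ρ y` iff for every `z` in `S¹` (here `WithOne S`, i.e. `S` with an
identity adjoined) there is a block `N_a` containing both `x·z` and `y·z`. -/
def rho {S : Type*} [Semigroup S] {A : Type*} (gen : A → S) (x y : S) : Prop :=
  ∀ z : WithOne S, ∃ a : A,
    (↑x * z) ∈ ((fun s : S => (s : WithOne S)) '' Nblock (gen a)) ∧
    (↑y * z) ∈ ((fun s : S => (s : WithOne S)) '' Nblock (gen a))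

namespace Stmt13
variable {S : Type*} [Semigroup S] {A : Type*}

lemma coe_spow (x : S) : ∀ n, 1 ≤ n → ((spow x n : S) : WithOne S) = (x : WithOne S) ^ n
  | 1, _ => by simp [spow]
  | (n + 2), _ => by
    show ((spow x (n+1) * x : S) : WithOne S) = _
    rw [WithOne.coe_mul, coe_spow x (n + 1) (by omega), ← pow_succ]

lemma spow_add (x : S) (m n : ℕ) (hm : 1 ≤ m) (hn : 1 ≤ n) :
    spow x (m + n) = spow x m * spow x n := by
  apply WithOne.coe_inj.mp
  rw [WithOne.coe_mul, coe_spow x (m + n) (by omega), coe_spow x m hm, coe_spow x n hn, pow_add]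

section Core
variable [Finite A] {gen : A → S} {FB : S → A} {LB : S → ℕ}

lemma grow_iter (u : WithOne S) (c : A) (q δ : ℕ)
    (h : u * (gen c : WithOne S) ^ q = (gen c : WithOne S) ^ (q + δ)) :
    ∀ k t, u ^ k * (gen c : WithOne S) ^ (q + t) = (gen c : WithOne S) ^ (q + k * δ + t) := by
  intro k
  induction k with
  | zero => intro t; simp
  | succ k ih =>
    intro t
    have h1 : u * (gen c : WithOne S) ^ (q + t) = (gen c : WithOne S) ^ (q + (δ + t)) := by
      have e : (gen c : WithOne S) ^ (q + t)
          = (gen c : WithOne S) ^ q * (gen c : WithOne S) ^ t := by rw [← pow_add]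
      rw [e, ← mul_assoc, h, ← pow_add]
      congr 1
      omega
    calc u ^ (k + 1) * (gen c : WithOne S) ^ (q + t)
        = u ^ k * (u * (gen c : WithOne S) ^ (q + t)) := by
          rw [pow_succ, mul_assoc]
      _ = u ^ k * (gen c : WithOne S) ^ (q + (δ + t)) := by rw [h1]
      _ = (gen c : WithOne S) ^ (q + (k + 1) * δ + t) := by
          rw [ih (δ + t)]; congr 1; ring

lemma ns_left (hfreeM : ∀ a b i j, 1 ≤ i → 1 ≤ j →
      (gen a : WithOne S) ^ i = (gen b : WithOne S) ^ j → a = b ∧ i = j)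
    (hL1 : ∀ x : S, 1 ≤ LB x)
    (hEq : ∀ x : S, (x : WithOne S) = (gen (FB x) : WithOne S) ^ LB x)
    (w : S) (β : A) (L K : ℕ) (h1 : 1 ≤ L) (h2 : 1 ≤ K)
    (h : (w : WithOne S) * (gen β : WithOne S) ^ L = (gen β : WithOne S) ^ K) : L ≤ K := by
  by_contra hc
  push_neg at hc
  set d := L - K with hd
  have hd1 : 1 ≤ d := by omega
  have hLK : L = K + d := by omega
  have base : ∀ t, (w : WithOne S) * (gen β : WithOne S) ^ (K + d + t)
      = (gen β : WithOne S) ^ (K + t) := by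
    intro t
    have e : (gen β : WithOne S) ^ (K + d + t)
        = (gen β : WithOne S) ^ L * (gen β : WithOne S) ^ t := by
      rw [← pow_add]; congr 1; omega
    rw [e, ← mul_assoc, h, ← pow_add]
  have iter : ∀ k t, (w : WithOne S) ^ (k + 1) * (gen β : WithOne S) ^ (K + (k + 1) * d + t)
      = (gen β : WithOne S) ^ (K + t) := by
    intro k
    induction k with
    | zero => intro t; simpa using base t
    | succ k ih =>
      intro t
      have e : K + (k + 1 + 1) * d + t = K + d + ((k + 1) * d + t) := by ring
      rw [e, pow_succ, mul_assoc, base ((k + 1) * d + t), ← add_assoc, ih t]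
  -- the absorbing family
  set x : ℕ → S := fun m => spow (gen β) ((m + 1) * (K + 1) * d) * spow w ((m + 1) * (K + 1))
    with hx
  have hxcoe : ∀ m, ((x m : S) : WithOne S)
      = (gen β : WithOne S) ^ ((m + 1) * (K + 1) * d) * (w : WithOne S) ^ ((m + 1) * (K + 1)) := by
    intro m
    have e1 : 1 ≤ (m + 1) * (K + 1) := Nat.one_le_iff_ne_zero.mpr (Nat.mul_ne_zero (by omega) (by omega))
    have e2 : 1 ≤ (m + 1) * (K + 1) * d :=
      Nat.one_le_iff_ne_zero.mpr (Nat.mul_ne_zero (by omega) (by omega))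
    rw [hx]
    simp only
    rw [WithOne.coe_mul, coe_spow _ _ e2, coe_spow _ _ e1]
  have absorb : ∀ m m', m < m' → (x m : S) * x m' = x m' := by
    intro m m' hmm'
    set km := (m + 1) * (K + 1) with hkm
    set km' := (m' + 1) * (K + 1) with hkm'
    have hkm1 : 1 ≤ km := Nat.one_le_iff_ne_zero.mpr (Nat.mul_ne_zero (by omega) (by omega))
    have hgap : km + (K + 1) ≤ km' := by
      have : (m + 1) + 1 ≤ m' + 1 := by omega
      calc km + (K + 1) = (m + 1) * (K + 1) + (K + 1) := rfl
        _ = ((m + 1) + 1) * (K + 1) := by ring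
        _ ≤ (m' + 1) * (K + 1) := Nat.mul_le_mul_right _ (by omega)
    have key : (w : WithOne S) ^ km * (gen β : WithOne S) ^ (km' * d)
        = (gen β : WithOne S) ^ ((km' - km) * d) := by
      obtain ⟨k, hk⟩ : ∃ k, km = k + 1 := ⟨km - 1, by omega⟩
      have ht : ∃ t, km' * d = K + km * d + t ∧ K + t = (km' - km) * d := by
        refine ⟨km' * d - K - km * d, ?_, ?_⟩ <;>
        · have h1 : km * d + (K+1) * d ≤ km' * d := by
            rw [← Nat.add_mul]; exact Nat.mul_le_mul_right _ hgap
          have h2 : K + 1 ≤ (K + 1) * d := Nat.le_mul_of_pos_right _ (by omega)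
          have h3 : (km' - km) * d = km' * d - km * d := by
            rw [Nat.sub_mul]
          omega
      obtain ⟨t, ht1, ht2⟩ := ht
      rw [ht1, ← ht2, hk]
      exact iter k t
    apply WithOne.coe_inj.mp
    rw [WithOne.coe_mul, hxcoe, hxcoe]
    calc ((gen β : WithOne S) ^ (km * d) * (w : WithOne S) ^ km)
          * ((gen β : WithOne S) ^ (km' * d) * (w : WithOne S) ^ km')
        = (gen β : WithOne S) ^ (km * d)
          * (((w : WithOne S) ^ km * (gen β : WithOne S) ^ (km' * d)) * (w : WithOne S) ^ km') := by
          rw [mul_assoc ((gen β : WithOne S) ^ (km * d)) ((w : WithOne S) ^ km)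
            ((gen β : WithOne S) ^ (km' * d) * (w : WithOne S) ^ km'),
            ← mul_assoc ((w : WithOne S) ^ km) ((gen β : WithOne S) ^ (km' * d))
            ((w : WithOne S) ^ km')]
      _ = (gen β : WithOne S) ^ (km * d)
          * ((gen β : WithOne S) ^ ((km' - km) * d) * (w : WithOne S) ^ km') := by rw [key]
      _ = ((gen β : WithOne S) ^ (km * d) * (gen β : WithOne S) ^ ((km' - km) * d))
          * (w : WithOne S) ^ km' := by
          rw [← mul_assoc ((gen β : WithOne S) ^ (km * d))
            ((gen β : WithOne S) ^ ((km' - km) * d)) ((w : WithOne S) ^ km')]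
      _ = (gen β : WithOne S) ^ (km' * d) * (w : WithOne S) ^ km' := by
          have e2 : km * d + (km' - km) * d = km' * d := by
            rw [← Nat.add_mul]; congr 1; omega
          rw [← pow_add, e2]
  obtain ⟨m, m', hne, hFB⟩ := Finite.exists_ne_map_eq_of_infinite (fun m : ℕ => FB (x m))
  -- wlog m < m'
  have main : ∀ m m', m < m' → FB (x m) = FB (x m') → False := by
    intro m m' hlt hq
    have h1 := hEq (x m)
    have h2 := hEq (x m')
    rw [hq] at h1
    set q := FB (x m') with hqq
    have : (gen q : WithOne S) ^ (LB (x m) + LB (x m'))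
        = (gen q : WithOne S) ^ (LB (x m')) := by
      rw [pow_add, ← h1, ← h2, ← WithOne.coe_mul, absorb m m' hlt, h2]
    have := (hfreeM q q _ _ (by have := hL1 (x m); have := hL1 (x m'); omega)
      (hL1 (x m')) this).2
    have := hL1 (x m)
    omega
  rcases lt_or_gt_of_ne hne with hlt | hlt
  · exact main m m' hlt hFB
  · exact main m' m hlt hFB.symm

lemma ns_right (hfreeM : ∀ a b i j, 1 ≤ i → 1 ≤ j →
      (gen a : WithOne S) ^ i = (gen b : WithOne S) ^ j → a = b ∧ i = j)
    (hL1 : ∀ x : S, 1 ≤ LB x)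
    (hEq : ∀ x : S, (x : WithOne S) = (gen (FB x) : WithOne S) ^ LB x)
    (w : S) (β : A) (L K : ℕ) (h1 : 1 ≤ L) (h2 : 1 ≤ K)
    (h : (gen β : WithOne S) ^ L * (w : WithOne S) = (gen β : WithOne S) ^ K) : L ≤ K := by
  by_contra hc
  push_neg at hc
  set d := L - K with hd
  have hd1 : 1 ≤ d := by omega
  have hLK : L = K + d := by omega
  have base : ∀ t, (gen β : WithOne S) ^ (K + d + t) * (w : WithOne S)
      = (gen β : WithOne S) ^ (K + t) := by
    intro t
    have e : (gen β : WithOne S) ^ (K + d + t)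
        = (gen β : WithOne S) ^ t * (gen β : WithOne S) ^ L := by
      rw [← pow_add]; congr 1; omega
    rw [e, mul_assoc, h, ← pow_add]
    congr 1; omega
  have iter : ∀ k t, (gen β : WithOne S) ^ (K + (k + 1) * d + t) * (w : WithOne S) ^ (k + 1)
      = (gen β : WithOne S) ^ (K + t) := by
    intro k
    induction k with
    | zero => intro t; simpa using base t
    | succ k ih =>
      intro t
      have e : K + (k + 1 + 1) * d + t = K + d + ((k + 1) * d + t) := by ring
      rw [e, pow_succ', ← mul_assoc, base ((k + 1) * d + t), ← add_assoc, ih t]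
  set x : ℕ → S := fun m => spow w ((m + 1) * (K + 1)) * spow (gen β) ((m + 1) * (K + 1) * d)
    with hx
  have hxcoe : ∀ m, ((x m : S) : WithOne S)
      = (w : WithOne S) ^ ((m + 1) * (K + 1)) * (gen β : WithOne S) ^ ((m + 1) * (K + 1) * d) := by
    intro m
    have e1 : 1 ≤ (m + 1) * (K + 1) := Nat.one_le_iff_ne_zero.mpr (Nat.mul_ne_zero (by omega) (by omega))
    have e2 : 1 ≤ (m + 1) * (K + 1) * d :=
      Nat.one_le_iff_ne_zero.mpr (Nat.mul_ne_zero (by omega) (by omega))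
    rw [hx]
    simp only
    rw [WithOne.coe_mul, coe_spow _ _ e2, coe_spow _ _ e1]
  have absorb : ∀ m m', m < m' → (x m' : S) * x m = x m' := by
    intro m m' hmm'
    set km := (m + 1) * (K + 1) with hkm
    set km' := (m' + 1) * (K + 1) with hkm'
    have hkm1 : 1 ≤ km := Nat.one_le_iff_ne_zero.mpr (Nat.mul_ne_zero (by omega) (by omega))
    have hgap : km + (K + 1) ≤ km' := by
      calc km + (K + 1) = (m + 1) * (K + 1) + (K + 1) := rfl
        _ = ((m + 1) + 1) * (K + 1) := by ring
        _ ≤ (m' + 1) * (K + 1) := Nat.mul_le_mul_right _ (by omega)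
    have key : (gen β : WithOne S) ^ (km' * d) * (w : WithOne S) ^ km
        = (gen β : WithOne S) ^ ((km' - km) * d) := by
      obtain ⟨k, hk⟩ : ∃ k, km = k + 1 := ⟨km - 1, by omega⟩
      have ht : ∃ t, km' * d = K + km * d + t ∧ K + t = (km' - km) * d := by
        refine ⟨km' * d - K - km * d, ?_, ?_⟩ <;>
        · have h1 : km * d + (K+1) * d ≤ km' * d := by
            rw [← Nat.add_mul]; exact Nat.mul_le_mul_right _ hgap
          have h2 : K + 1 ≤ (K + 1) * d := Nat.le_mul_of_pos_right _ (by omega)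
          have h3 : (km' - km) * d = km' * d - km * d := by
            rw [Nat.sub_mul]
          omega
      obtain ⟨t, ht1, ht2⟩ := ht
      rw [ht1, ← ht2, hk]
      exact iter k t
    apply WithOne.coe_inj.mp
    rw [WithOne.coe_mul, hxcoe, hxcoe]
    calc ((w : WithOne S) ^ km' * (gen β : WithOne S) ^ (km' * d))
          * ((w : WithOne S) ^ km * (gen β : WithOne S) ^ (km * d))
        = (w : WithOne S) ^ km'
          * (((gen β : WithOne S) ^ (km' * d) * (w : WithOne S) ^ km) * (gen β : WithOne S) ^ (km * d)) := by
          rw [mul_assoc ((w : WithOne S) ^ km') ((gen β : WithOne S) ^ (km' * d))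
            ((w : WithOne S) ^ km * (gen β : WithOne S) ^ (km * d)),
            ← mul_assoc ((gen β : WithOne S) ^ (km' * d)) ((w : WithOne S) ^ km)
            ((gen β : WithOne S) ^ (km * d))]
      _ = (w : WithOne S) ^ km'
          * ((gen β : WithOne S) ^ ((km' - km) * d) * (gen β : WithOne S) ^ (km * d)) := by rw [key]
      _ = (w : WithOne S) ^ km' * (gen β : WithOne S) ^ (km' * d) := by
          have e2 : (km' - km) * d + km * d = km' * d := by
            rw [← Nat.add_mul]; congr 1; omega
          rw [← pow_add, e2]
  obtain ⟨m, m', hne, hFB⟩ := Finite.exists_ne_map_eq_of_infinite (fun m : ℕ => FB (x m))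
  have main : ∀ m m', m < m' → FB (x m) = FB (x m') → False := by
    intro m m' hlt hq
    have h1' := hEq (x m)
    have h2' := hEq (x m')
    rw [hq] at h1'
    set q := FB (x m') with hqq
    have : (gen q : WithOne S) ^ (LB (x m') + LB (x m))
        = (gen q : WithOne S) ^ (LB (x m')) := by
      rw [pow_add, ← h1', ← h2', ← WithOne.coe_mul, absorb m m' hlt, h2']
    have := (hfreeM q q _ _ (by have := hL1 (x m); have := hL1 (x m'); omega)
      (hL1 (x m')) this).2
    have := hL1 (x m)
    omega
  rcases lt_or_gt_of_ne hne with hlt | hlt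
  · exact main m m' hlt hFB
  · exact main m' m hlt hFB.symm

lemma row_periodic (hfreeM : ∀ a b i j, 1 ≤ i → 1 ≤ j →
      (gen a : WithOne S) ^ i = (gen b : WithOne S) ^ j → a = b ∧ i = j)
    (hL1 : ∀ x : S, 1 ≤ LB x)
    (hEq : ∀ x : S, (x : WithOne S) = (gen (FB x) : WithOne S) ^ LB x)
    (y : S) (c : A) :
    ∃ N T : ℕ, 1 ≤ N ∧ 1 ≤ T ∧ ∀ V, N ≤ V →
      FB (y * spow (gen c) (V + T)) = FB (y * spow (gen c) V) := by
  classical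
  have uniq : ∀ (x : S) (b : A) (j : ℕ), 1 ≤ j →
      (x : WithOne S) = (gen b : WithOne S) ^ j → FB x = b ∧ LB x = j :=
    fun x b j hj hx => hfreeM (FB x) b (LB x) j (hL1 x) hj ((hEq x).symm.trans hx)
  set w : ℕ → S := fun V => y * spow (gen c) V with hw
  have hwcoe : ∀ V, 1 ≤ V →
      ((w V : S) : WithOne S) = (y : WithOne S) * (gen c : WithOne S) ^ V := by
    intro V hV
    rw [hw]; simp only; rw [WithOne.coe_mul, coe_spow _ _ hV]
  have hstep0 : ∀ V t, 1 ≤ V →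
      ((w (V + t) : S) : WithOne S) = (w V : WithOne S) * (gen c : WithOne S) ^ t := by
    intro V t hV
    rw [hwcoe V hV, hwcoe (V + t) (by omega), pow_add, mul_assoc]
  by_cases hrep : ∃ p : ℕ × ℕ, 1 ≤ p.1 ∧ p.1 < p.2 ∧ w p.1 = w p.2
  · obtain ⟨⟨V, V'⟩, hV1, hVV, hweq⟩ := hrep
    refine ⟨V, V' - V, hV1, by omega, ?_⟩
    intro W hW
    have h1 : (w W : WithOne S) = (w V : WithOne S) * (gen c : WithOne S) ^ (W - V) := by
      have := hstep0 V (W - V) hV1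
      rw [← this]; congr 2; omega
    have h2 : (w (W + (V' - V)) : WithOne S)
        = (w V' : WithOne S) * (gen c : WithOne S) ^ (W - V) := by
      have := hstep0 V' (W - V) (by omega)
      rw [← this]; congr 2; omega
    have : w (W + (V' - V)) = w W := by
      apply WithOne.coe_inj.mp
      rw [h1, h2, hweq]
    show FB (w (W + (V' - V))) = FB (w W)
    rw [this]
  · push_neg at hrep
    set G : ℕ → A := fun V => FB (w V) with hG
    set E : ℕ → ℕ := fun V => LB (w V) with hE
    have hgrow : ∀ V V', 1 ≤ V → V < V' → G V = G V' →
        ∀ W, V ≤ W → G W = G V → G (W + (V' - V)) = G V := by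
      intro V V' hV1 hVV hGVV W hVW hGW
      set β := G V with hβ
      have hwV : (w V : WithOne S) = (gen β : WithOne S) ^ (E V) := hEq (w V)
      have hwV' : (w V' : WithOne S) = (gen β : WithOne S) ^ (E V') := by
        rw [hGVV]; exact hEq (w V')
      have hrel : (gen β : WithOne S) ^ (E V) * (gen c : WithOne S) ^ (V' - V)
          = (gen β : WithOne S) ^ (E V') := by
        rw [← hwV, ← hwV']
        have := hstep0 V (V' - V) hV1
        rw [← this]; congr 2; omega
      have hwW : (w W : WithOne S) = (gen β : WithOne S) ^ (E W) := by
        rw [← hGW]; exact hEq (w W)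
      have hEVW : E V ≤ E W := by
        rcases eq_or_lt_of_le hVW with heq | hlt
        · rw [heq]
        · have hrelW : (gen β : WithOne S) ^ (E V) * ((spow (gen c) (W - V) : S) : WithOne S)
              = (gen β : WithOne S) ^ (E W) := by
            rw [coe_spow _ _ (by omega), ← hwV, ← hwW]
            have := hstep0 V (W - V) hV1
            rw [← this]; congr 2; omega
          exact ns_right hfreeM hL1 hEq _ _ _ _ (hL1 (w V)) (hL1 (w W)) hrelW
      have hcomp : (w (W + (V' - V)) : WithOne S)
          = (gen β : WithOne S) ^ ((E W - E V) + E V') := by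
        rw [hstep0 W (V' - V) (by omega), hwW]
        have e1 : (gen β : WithOne S) ^ (E W)
            = (gen β : WithOne S) ^ (E W - E V) * (gen β : WithOne S) ^ (E V) := by
          rw [← pow_add]; congr 1; omega
        rw [e1, mul_assoc, hrel, ← pow_add]
      have h5 : 1 ≤ E V' := hL1 (w V')
      exact (uniq _ _ _ (by omega) hcomp).1
    set occ : A → Prop := fun β => ∃ p : ℕ × ℕ, 1 ≤ p.1 ∧ p.1 < p.2 ∧ G p.1 = β ∧ G p.2 = β
      with hocc
    set V0 : A → ℕ := fun β => if h : occ β then h.choose.1 else 0 with hV0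
    set V1 : A → ℕ := fun β => if h : occ β then h.choose.2 else 0 with hV1
    set sOcc : A → ℕ := fun β => if h : ∃ V, 1 ≤ V ∧ G V = β then h.choose else 0 with hsOcc
    have hV01 : ∀ β, occ β → 1 ≤ V0 β ∧ V0 β < V1 β ∧ G (V0 β) = β ∧ G (V1 β) = β := by
      intro β h
      rw [hV0, hV1]
      simp only [dif_pos h]
      exact ⟨h.choose_spec.1, h.choose_spec.2.1, h.choose_spec.2.2.1, h.choose_spec.2.2.2⟩
    letI : Fintype A := Fintype.ofFinite A
    set N : ℕ := 1 + Finset.univ.sup (fun β => max (V1 β) (sOcc β)) with hN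
    set T : ℕ := ∏ β ∈ Finset.univ, (if occ β then V1 β - V0 β else 1) with hT
    have hT1 : 1 ≤ T := by
      rw [hT]
      apply Finset.one_le_prod'
      intro β _
      split_ifs with h
      · have := hV01 β h; omega
      · exact le_refl 1
    refine ⟨N, T, by omega, hT1, ?_⟩
    intro V hV
    set β := G V with hβ
    have hVsup : ∀ γ, max (V1 γ) (sOcc γ) < N := by
      intro γ
      have h6 := Finset.le_sup (f := fun β => max (V1 β) (sOcc β)) (Finset.mem_univ γ)
      omega
    have hoccβ : occ β := by
      by_contra hno
      have hEx : ∃ W, 1 ≤ W ∧ G W = β := ⟨V, by omega, rfl⟩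
      have hchoose : 1 ≤ hEx.choose ∧ G hEx.choose = β := hEx.choose_spec
      have hsO : sOcc β = hEx.choose := by rw [hsOcc]; simp only [dif_pos hEx]
      have hVne : V = hEx.choose := by
        by_contra hne
        rcases lt_or_gt_of_ne hne with hlt | hlt
        · exact hno ⟨(V, hEx.choose), by omega, hlt, rfl, hchoose.2⟩
        · exact hno ⟨(hEx.choose, V), hchoose.1, hlt, hchoose.2, rfl⟩
      have := hVsup β
      omega
    obtain ⟨h01, h0lt, hG0, hG1⟩ := hV01 β hoccβ
    set u := V1 β - V0 β with hu
    have hukey : ∀ k, G (V + k * u) = β := by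
      intro k
      induction k with
      | zero => simpa using hβ.symm
      | succ k ih =>
        have e : V + (k + 1) * u = (V + k * u) + u := by ring
        rw [e]
        have := hgrow (V0 β) (V1 β) h01 h0lt (hG0.trans hG1.symm)
          (V + k * u) (by have := hVsup β; omega) (by rw [ih, hG0])
        rw [hG0] at this
        exact this
    have hdvd : u ∣ T := by
      rw [hT]
      have : (if occ β then V1 β - V0 β else 1) = u := by rw [if_pos hoccβ]
      rw [← this]
      exact Finset.dvd_prod_of_mem _ (Finset.mem_univ β)
    obtain ⟨t', ht'⟩ := hdvd
    show G (V + T) = G V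
    rw [← hβ, ht', mul_comm u t', hukey t']

lemma main_letter (hfreeM : ∀ a b i j, 1 ≤ i → 1 ≤ j →
      (gen a : WithOne S) ^ i = (gen b : WithOne S) ^ j → a = b ∧ i = j)
    (hL1 : ∀ x : S, 1 ≤ LB x)
    (hEq : ∀ x : S, (x : WithOne S) = (gen (FB x) : WithOne S) ^ LB x)
    (a0 : A) :
    ∃ i j : ℕ, 1 ≤ i ∧ i < j ∧
      ∀ z : S, FB (spow (gen a0) i * z) = FB (spow (gen a0) j * z) := by
  classical
  letI : Fintype A := Fintype.ofFinite A
  set nA := Fintype.card A with hnA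
  set f := gen a0 with hf
  -- pigeonhole helper on windows of length nA+2
  have pigeon : ∀ (g : ℕ → A) (base : ℕ),
      ∃ p q, base ≤ p ∧ p < q ∧ q ≤ base + (nA + 1) ∧ g p = g q := by
    intro g base
    obtain ⟨u, v, huv, heq⟩ := Fintype.exists_ne_map_eq_of_card_lt
      (fun c : Fin (nA + 2) => g (base + (c : ℕ))) (by rw [Fintype.card_fin]; omega)
    have hu := u.isLt
    have hv := v.isLt
    rcases lt_or_gt_of_ne huv with hlt | hlt
    · have : (u : ℕ) < (v : ℕ) := hlt
      exact ⟨base + u, base + v, by omega, by omega, by omega, heq⟩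
    · have : (v : ℕ) < (u : ℕ) := hlt
      exact ⟨base + v, base + u, by omega, by omega, by omega, heq.symm⟩
  -- rows
  have hrows : ∀ (r : ℕ) (χ : A), ∃ N T : ℕ, 1 ≤ N ∧ 1 ≤ T ∧ ∀ V, N ≤ V →
      FB (spow f (r+1) * spow (gen χ) (V + T)) = FB (spow f (r+1) * spow (gen χ) V) :=
    fun r χ => row_periodic hfreeM hL1 hEq (spow f (r+1)) χ
  choose Nrow Trow hN1 hT1 hper using hrows
  set IXS := (Finset.range (nA+1)) ×ˢ (Finset.univ : Finset A) with hIXS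
  set NStar := IXS.sup (fun p => Nrow p.1 p.2) with hNS
  set TStar := ∏ p ∈ IXS, Trow p.1 p.2 with hTS
  have hTS1 : 1 ≤ TStar := Finset.one_le_prod' (fun p _ => hT1 p.1 p.2)
  have hmemIXS : ∀ r (χ : A), r < nA + 1 → ((r, χ) : ℕ × A) ∈ IXS := by
    intro r χ hr
    rw [hIXS, Finset.mem_product]
    exact ⟨Finset.mem_range.mpr hr, Finset.mem_univ χ⟩
  have hTdvd : ∀ r χ, r < nA + 1 → Trow r χ ∣ TStar := by
    intro r χ hr
    exact Finset.dvd_prod_of_mem (fun p : ℕ × A => Trow p.1 p.2) (hmemIXS r χ hr)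
  have hNle : ∀ r χ, r < nA + 1 → Nrow r χ ≤ NStar := by
    intro r χ hr
    have h6 := Finset.le_sup (f := fun p : ℕ × A => Nrow p.1 p.2) (hmemIXS r χ hr)
    simpa using h6
  set Q := ∏ k ∈ Finset.range (nA+1), (k+1) with hQ
  have hQ1 : 1 ≤ Q := Finset.one_le_prod' (fun k _ => by omega)
  have hsQ : ∀ s, 1 ≤ s → s ≤ nA + 1 → s ∣ Q := by
    intro s h1 h2
    have e : s = (s - 1) + 1 := by omega
    rw [e]
    exact Finset.dvd_prod_of_mem (fun k => k + 1)
      (by simp only [Finset.mem_range]; omega)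
  set D := Q * (TStar * Q) with hD
  have hD1 : 1 ≤ D := Nat.one_le_iff_ne_zero.mpr
    (Nat.mul_ne_zero (by omega) (Nat.mul_ne_zero (by omega) (by omega)))
  by_contra hcon
  push_neg at hcon
  have Hbad : ∀ i, 1 ≤ i → ∃ z : S, FB (spow f i * z) ≠ FB (spow f (i + D) * z) :=
    fun i hi => hcon i (i + D) hi (by omega)
  -- STEP 1 : defect extraction
  have step1 : ∀ m, 1 ≤ m → ∃ (χ : A) (q1 t : ℕ) (z : S),
      1 ≤ q1 ∧ q1 ≤ NStar ∧ m ≤ t ∧ 1 ≤ t ∧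
      ((spow f t * z : S) : WithOne S) = (gen χ : WithOne S) ^ q1 ∧
      ∃ s δ, 1 ≤ s ∧ 1 ≤ δ ∧
        (f : WithOne S) ^ s * (gen χ : WithOne S) ^ q1
          = (gen χ : WithOne S) ^ (q1 + δ) := by
    intro m hm
    obtain ⟨z, hz⟩ := Hbad (m + (nA + 1)) (by omega)
    set i := m + (nA + 1) with hi
    have xsc : ∀ n, 1 ≤ n → ((spow f n * z : S) : WithOne S)
        = (f : WithOne S) ^ n * (z : WithOne S) := fun n hn => by
      rw [WithOne.coe_mul, coe_spow _ _ hn]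
    have xsplit : ∀ cc n, 1 ≤ n → ((spow f (cc + n) * z : S) : WithOne S)
        = (f : WithOne S) ^ cc * ((spow f n * z : S) : WithOne S) := by
      intro cc n hn
      rw [xsc _ (by omega), xsc _ hn, pow_add, mul_assoc]
    obtain ⟨t1, t2, ht1m, ht12, ht2, hGeq⟩ := pigeon (fun n => FB (spow f n * z)) m
    set s := t2 - t1 with hs
    set r' := i - t1 with hr'
    have ht2i : t2 ≤ i := by omega
    have hr'1 : 1 ≤ r' := by omega
    have hr'le : r' ≤ nA + 1 := by omega
    have hs1 : 1 ≤ s := by omega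
    have hsle : s ≤ nA + 1 := by omega
    have hir : i = r' + t1 := by omega
    set χ := FB (spow f t1 * z) with hχ
    set q1 := LB (spow f t1 * z) with hq1
    set q2 := LB (spow f t2 * z) with hq2
    have hco1 : ((spow f t1 * z : S) : WithOne S) = (gen χ : WithOne S) ^ q1 := hEq _
    have hco2 : ((spow f t2 * z : S) : WithOne S) = (gen χ : WithOne S) ^ q2 := by
      have := hEq (spow f t2 * z)
      rw [← hGeq] at this
      exact this
    have hrel : (f : WithOne S) ^ s * (gen χ : WithOne S) ^ q1
        = (gen χ : WithOne S) ^ q2 := by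
      rw [← hco1, ← hco2]
      have e : t2 = s + t1 := by omega
      rw [e, xsplit s t1 (by omega)]
    have hq12 : q1 ≤ q2 := by
      apply ns_left hfreeM hL1 hEq (spow f s) χ q1 q2 (hL1 _) (hL1 _)
      rw [coe_spow _ _ hs1]
      exact hrel
    by_cases hq12eq : q1 = q2
    · exfalso
      have hxeq : (spow f t1 * z : S) = spow f t2 * z := by
        apply WithOne.coe_inj.mp
        rw [hco1, hco2, hq12eq]
      have inv : ∀ cc, (spow f (t1 + cc) * z : S) = spow f (t2 + cc) * z := by
        intro cc
        cases Nat.eq_zero_or_pos cc with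
        | inl h0 => rw [h0]; simpa using hxeq
        | inr h0 =>
          apply WithOne.coe_inj.mp
          rw [Nat.add_comm t1 cc, Nat.add_comm t2 cc, xsplit cc t1 (by omega),
            xsplit cc t2 (by omega), hxeq]
      have invs : ∀ k cc, (spow f (t1 + cc) * z : S) = spow f (t1 + cc + k * s) * z := by
        intro k
        induction k with
        | zero => intro cc; simp
        | succ k ih =>
          intro cc
          have e1 : t1 + cc + (k + 1) * s = t2 + (cc + k * s) := by
            rw [Nat.succ_mul]; omega
          rw [e1, ← inv (cc + k * s)]
          have e2 : t1 + (cc + k * s) = t1 + cc + k * s := by omega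
          rw [e2, ← ih cc]
      obtain ⟨q', hq'⟩ := hsQ s hs1 hsle
      have hDs : D = (q' * (TStar * Q)) * s := by rw [hD, hq']; ring
      have e2 : i + D = t1 + r' + (q' * (TStar * Q)) * s := by omega
      apply hz
      have e3 : i = t1 + r' := by omega
      rw [e2, e3]
      exact congrArg FB (invs (q' * (TStar * Q)) r')
    · -- q1 < q2 : growth
      have hq12lt : q1 < q2 := by omega
      set δ := q2 - q1 with hδ
      have hδ1 : 1 ≤ δ := by omega
      have hgrow : (f : WithOne S) ^ s * (gen χ : WithOne S) ^ q1
          = (gen χ : WithOne S) ^ (q1 + δ) := by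
        rw [hrel]; congr 1; omega
      by_cases hqN : q1 ≤ NStar
      · -- defect
        exact ⟨χ, q1, t1, z, hL1 _, hqN, ht1m, by omega, hco1, s, δ, hs1, hδ1, hgrow⟩
      · -- row-periodicity contradiction
        exfalso
        push_neg at hqN
        have hNrow : Nrow (r' - 1) χ ≤ NStar := hNle (r' - 1) χ (by omega)
        have hrr : (r' - 1) + 1 = r' := by omega
        -- element identifications
        have hcoi : ((spow f i * z : S) : WithOne S)
            = (f : WithOne S) ^ r' * (gen χ : WithOne S) ^ q1 := by
          rw [hir, xsplit r' t1 (by omega), hco1]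
        have hrow_coe : ∀ V, 1 ≤ V → ((spow f ((r'-1)+1) * spow (gen χ) V : S) : WithOne S)
            = (f : WithOne S) ^ r' * (gen χ : WithOne S) ^ V := by
          intro V hV
          rw [WithOne.coe_mul, coe_spow _ _ (by omega), coe_spow _ _ hV, hrr]
        have hFBi : FB (spow f i * z) = FB (spow f ((r'-1)+1) * spow (gen χ) q1) := by
          apply congrArg FB
          apply WithOne.coe_inj.mp
          rw [hcoi, hrow_coe q1 (hL1 _)]
        obtain ⟨q', hq'⟩ := hsQ s hs1 hsle
        set k := q' * (TStar * Q) with hk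
        have hDs : D = s * k := by rw [hk, hD, hq']; ring
        obtain ⟨k'', hk''⟩ := hTdvd (r' - 1) χ (by omega)
        have hkT : k = Trow (r' - 1) χ * (k'' * q' * Q) := by
          rw [hk, hk'']; ring
        have hcoiD : ((spow f (i + D) * z : S) : WithOne S)
            = (f : WithOne S) ^ r' * (gen χ : WithOne S) ^ (q1 + k * δ) := by
          have e4 : i + D = (r' + D) + t1 := by omega
          rw [e4, xsplit (r' + D) t1 (by omega), hco1, pow_add, mul_assoc]
          congr 1
          rw [hDs, pow_mul]
          have := grow_iter ((f : WithOne S) ^ s) χ q1 δ hgrow k 0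
          simpa using this
        have hFBiD : FB (spow f (i + D) * z)
            = FB (spow f ((r'-1)+1) * spow (gen χ) (q1 + k * δ)) := by
          apply congrArg FB
          apply WithOne.coe_inj.mp
          rw [hcoiD, hrow_coe (q1 + k * δ) (by have := hL1 (spow f t1 * z); omega)]
        have periter : ∀ jj, FB (spow f ((r'-1)+1) * spow (gen χ) (q1 + jj * Trow (r'-1) χ))
            = FB (spow f ((r'-1)+1) * spow (gen χ) q1) := by
          intro jj
          induction jj with
          | zero => simp
          | succ jj ih =>
            have e5 : q1 + (jj+1) * Trow (r'-1) χ
                = (q1 + jj * Trow (r'-1) χ) + Trow (r'-1) χ := by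
              rw [Nat.succ_mul]; omega
            rw [e5, hper (r'-1) χ (q1 + jj * Trow (r'-1) χ) (by omega), ih]
        have e6 : q1 + k * δ = q1 + (k'' * q' * Q * δ) * Trow (r'-1) χ := by
          congr 1
          rw [hkT]; ring
        apply hz
        rw [hFBi, hFBiD, e6, periter (k'' * q' * Q * δ)]
  -- STEP 2 : chain analysis
  have step2 : ∀ (χ : A) (q1 t : ℕ) (z : S), 1 ≤ q1 → 1 ≤ t →
      ((spow f t * z : S) : WithOne S) = (gen χ : WithOne S) ^ q1 →
      (∃ s δ, 1 ≤ s ∧ 1 ≤ δ ∧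
        (f : WithOne S) ^ s * (gen χ : WithOne S) ^ q1 = (gen χ : WithOne S) ^ (q1 + δ)) →
      nA + 2 ≤ t →
      ∃ (rt : ℕ) (α : A) (E : ℕ), 1 ≤ rt ∧ rt ≤ nA + 1 ∧ 1 ≤ E ∧
        (t - (nA+2))/(nA+1) + 1 ≤ E ∧
        (f : WithOne S) ^ rt * (gen χ : WithOne S) ^ q1 = (gen α : WithOne S) ^ E := by
    intro χ q1 t z hq11 ht1 hcoet ⟨s, δ, hs1, hδ1, hgrow⟩ htbig
    have xsc : ∀ n, 1 ≤ n → ((spow f n * z : S) : WithOne S)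
        = (f : WithOne S) ^ n * (z : WithOne S) := fun n hn => by
      rw [WithOne.coe_mul, coe_spow _ _ hn]
    have xsplit : ∀ cc n, 1 ≤ n → ((spow f (cc + n) * z : S) : WithOne S)
        = (f : WithOne S) ^ cc * ((spow f n * z : S) : WithOne S) := by
      intro cc n hn
      rw [xsc _ (by omega), xsc _ hn, pow_add, mul_assoc]
    by_cases hrep : ∃ p : ℕ × ℕ, 1 ≤ p.1 ∧ p.1 < p.2 ∧ p.2 ≤ t ∧
        (spow f p.1 * z : S) = spow f p.2 * z
    · exfalso
      obtain ⟨⟨n, n'⟩, hn1, hnn', hn't, hxeq⟩ := hrep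
      set pp := n' - n with hpp
      have hpp1 : 1 ≤ pp := by omega
      have inv : ∀ cc, (spow f (n + cc) * z : S) = spow f (n' + cc) * z := by
        intro cc
        cases Nat.eq_zero_or_pos cc with
        | inl h0 => rw [h0]; simpa using hxeq
        | inr h0 =>
          apply WithOne.coe_inj.mp
          rw [Nat.add_comm n cc, Nat.add_comm n' cc, xsplit cc n (by omega),
            xsplit cc n' (by omega), hxeq]
      have hfix : ∀ cc, (spow f (t + cc) * z : S) = spow f (t + pp + cc) * z := by
        intro cc
        have e1 : t + cc = n + ((t - n) + cc) := by omega
        have e2 : t + pp + cc = n' + ((t - n) + cc) := by omega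
        rw [e1, e2]
        exact inv ((t - n) + cc)
      have hfixk : ∀ k, (spow f t * z : S) = spow f (t + k * pp) * z := by
        intro k
        induction k with
        | zero => simp
        | succ k ih =>
          have e1 : t + (k + 1) * pp = t + pp + k * pp := by rw [Nat.succ_mul]; omega
          have e2 := hfix (k * pp)
          rw [e1, ← e2]
          have e3 : t + k * pp = t + k * pp := rfl
          rw [← ih]
      -- now contradiction via growth
      have hcoe2 : ((spow f (t + s * pp) * z : S) : WithOne S)
          = (gen χ : WithOne S) ^ (q1 + pp * δ) := by
        have e1 : t + s * pp = (s * pp) + t := by omega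
        rw [e1, xsplit (s * pp) t ht1, hcoet, pow_mul]
        have := grow_iter ((f : WithOne S) ^ s) χ q1 δ hgrow pp 0
        simpa [Nat.mul_comm] using this
      have : (gen χ : WithOne S) ^ q1 = (gen χ : WithOne S) ^ (q1 + pp * δ) := by
        rw [← hcoet, ← hcoe2]
        exact congrArg (fun u : S => (u : WithOne S)) (hfixk s)
      have hppδ : 1 ≤ pp * δ := Nat.one_le_iff_ne_zero.mpr
        (Nat.mul_ne_zero (by omega) (by omega))
      have := (hfreeM χ χ _ _ hq11 (by omega) this).2
      omega
    · push_neg at hrep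
      obtain ⟨v, v', hv1, hvv', hv'le, hGvv⟩ := pigeon (fun n => FB (spow f n * z)) 1
      set d := v' - v with hd
      have hd1 : 1 ≤ d := by omega
      have hdle : d ≤ nA + 1 := by omega
      set α := FB (spow f v * z) with hα
      set e := LB (spow f v * z) with he
      set e' := LB (spow f v' * z) with he'
      have hcov : ((spow f v * z : S) : WithOne S) = (gen α : WithOne S) ^ e := hEq _
      have hcov' : ((spow f v' * z : S) : WithOne S) = (gen α : WithOne S) ^ e' := by
        have := hEq (spow f v' * z)
        rw [← hGvv] at this
        exact this
      have hrel2 : (f : WithOne S) ^ d * (gen α : WithOne S) ^ e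
          = (gen α : WithOne S) ^ e' := by
        rw [← hcov, ← hcov']
        have e1 : v' = d + v := by omega
        rw [e1, xsplit d v (by omega)]
      have hee' : e ≤ e' := by
        apply ns_left hfreeM hL1 hEq (spow f d) α e e' (hL1 _) (hL1 _)
        rw [coe_spow _ _ hd1]
        exact hrel2
      have heee : e ≠ e' := by
        intro heq
        apply hrep (v, v') hv1 hvv' (by omega)
        apply WithOne.coe_inj.mp
        rw [hcov, hcov', heq]
      set δ' := e' - e with hδ'
      have hδ'1 : 1 ≤ δ' := by omega
      have hgrow2 : (f : WithOne S) ^ d * (gen α : WithOne S) ^ e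
          = (gen α : WithOne S) ^ (e + δ') := by
        rw [hrel2]; congr 1; omega
      obtain ⟨qq, rem, hdm, hremd⟩ : ∃ qq rem, t - v = d * qq + rem ∧ rem < d :=
        ⟨(t - v) / d, (t - v) % d, (Nat.div_add_mod (t - v) d).symm, Nat.mod_lt _ (by omega)⟩
      set rt := d - rem with hrt
      have hrt1 : 1 ≤ rt := by omega
      have hrtle : rt ≤ nA + 1 := by omega
      have hidx : v + (qq + 1) * d = t + rt := by
        have e3 : (qq + 1) * d = d * qq + d := by ring
        omega
      set E := e + (qq + 1) * δ' with hE
      have hE1 : qq + 1 ≤ E := by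
        have : qq + 1 ≤ (qq + 1) * δ' := Nat.le_mul_of_pos_right _ (by omega)
        omega
      have hcoP1 : ((spow f (v + (qq+1) * d) * z : S) : WithOne S)
          = (gen α : WithOne S) ^ E := by
        have e4 : v + (qq + 1) * d = ((qq + 1) * d) + v := by omega
        have e4b : (qq + 1) * d = d * (qq + 1) := Nat.mul_comm _ _
        rw [e4, xsplit ((qq+1)*d) v (by omega), hcov, e4b, pow_mul]
        have := grow_iter ((f : WithOne S) ^ d) α e δ' hgrow2 (qq + 1) 0
        rw [hE]
        simpa using this
      have hcoP2 : ((spow f (t + rt) * z : S) : WithOne S)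
          = (f : WithOne S) ^ rt * (gen χ : WithOne S) ^ q1 := by
        have e5 : t + rt = rt + t := by omega
        rw [e5, xsplit rt t ht1, hcoet]
      refine ⟨rt, α, E, hrt1, hrtle, by omega, ?_, ?_⟩
      · have h7 : t - (nA + 2) ≤ (nA + 1) * qq + nA := by
          have h7a : d * qq ≤ (nA + 1) * qq := Nat.mul_le_mul_right qq hdle
          omega
        have h8 : (t - (nA + 2)) / (nA + 1) ≤ qq :=
          (Nat.div_le_iff_le_mul_add_pred (by omega)).mpr (by omega)
        omega
      · rw [← hcoP2, ← hidx, hcoP1]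
  -- STEP 3 : pigeonhole over m
  have main2 : ∀ m : ℕ, ∃ (χ α : A) (q1 rt E : ℕ),
      1 ≤ q1 ∧ q1 ≤ NStar ∧ 1 ≤ rt ∧ rt ≤ nA + 1 ∧ 1 ≤ E ∧
      m / (nA + 1) + 1 ≤ E ∧
      (f : WithOne S) ^ rt * (gen χ : WithOne S) ^ q1 = (gen α : WithOne S) ^ E := by
    intro m
    obtain ⟨χ, q1, t, z, h1, h2, h3, h4, h5, hgd⟩ := step1 (m + (nA + 2)) (by omega)
    obtain ⟨rt, α, E, hh1, hh2, hh3, hh4, hh5⟩ := step2 χ q1 t z h1 h4 h5 hgd (by omega)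
    refine ⟨χ, α, q1, rt, E, h1, h2, hh1, hh2, hh3, ?_, hh5⟩
    have h9 : m / (nA + 1) ≤ (t - (nA + 2)) / (nA + 1) :=
      Nat.div_le_div_right (by omega)
    omega
  choose χc αc q1c rc Ec hc1 hc2 hc3 hc4 hc5 hc6 hc7 using main2
  set g : ℕ → A × A × Fin (NStar + 1) × Fin (nA + 2) :=
    fun m => (χc m, αc m, ⟨q1c m, by have := hc2 m; omega⟩, ⟨rc m, by have := hc4 m; omega⟩)
    with hg
  obtain ⟨y, hy⟩ := Finite.exists_infinite_fiber g
  have hInf : (g ⁻¹' {y}).Infinite := Set.infinite_coe_iff.mp hy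
  obtain ⟨m1, hm1⟩ := hInf.nonempty
  obtain ⟨m2, hm2mem, hm2gt⟩ := hInf.exists_gt ((nA + 1) * (Ec m1 + 1))
  have hgeq : g m1 = g m2 := by
    have h1 : g m1 = y := hm1
    have h2 : g m2 = y := hm2mem
    rw [h1, h2]
  have hχeq : χc m1 = χc m2 := congrArg (fun p => p.1) hgeq
  have hαeq : αc m1 = αc m2 := congrArg (fun p => p.2.1) hgeq
  have hq1eq : q1c m1 = q1c m2 := by
    have := congrArg (fun p => (p.2.2.1 : ℕ)) hgeq
    simpa [hg] using this
  have hreq : rc m1 = rc m2 := by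
    have := congrArg (fun p => (p.2.2.2 : ℕ)) hgeq
    simpa [hg] using this
  have hE2big : Ec m1 < Ec m2 := by
    have h10 := hc6 m2
    have h11 : Ec m1 + 1 ≤ m2 / (nA + 1) := by
      rw [Nat.le_div_iff_mul_le (by omega : 0 < nA + 1)]
      have := Nat.mul_comm (nA + 1) (Ec m1 + 1)
      omega
    omega
  have hEE : (gen (αc m1) : WithOne S) ^ (Ec m1) = (gen (αc m1) : WithOne S) ^ (Ec m2) := by
    have e1 := hc7 m1
    have e2 := hc7 m2
    rw [← hχeq, ← hαeq, ← hq1eq, ← hreq] at e2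
    rw [← e1, ← e2]
  have := (hfreeM _ _ _ _ (hc5 m1) (hc5 m2) hEE).2
  omega

end Core

section Final
variable [Finite A]

theorem final (gen : A → S)
    (hcover : ∀ x : S, ∃ a : A, x ∈ Nblock (gen a))
    (hfree : ∀ (a b : A) (i j : ℕ), 1 ≤ i → 1 ≤ j →
      spow (gen a) i = spow (gen b) j → a = b ∧ i = j) :
    {C : Set S | ∃ x : S, C = {y : S | rho gen x y}}.Finite := by
  classical
  have hcov' : ∀ x : S, ∃ (a : A) (i : ℕ), 1 ≤ i ∧ x = spow (gen a) i := by
    intro x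
    obtain ⟨a, ha⟩ := hcover x
    obtain ⟨i, hi1, hi2⟩ := ha
    exact ⟨a, i, hi1, hi2⟩
  choose FB LB hL1 hSEq using hcov'
  have hEq : ∀ x : S, (x : WithOne S) = (gen (FB x) : WithOne S) ^ LB x := by
    intro x
    conv_lhs => rw [hSEq x]
    exact coe_spow _ _ (hL1 x)
  have hfreeM : ∀ a b i j, 1 ≤ i → 1 ≤ j →
      (gen a : WithOne S) ^ i = (gen b : WithOne S) ^ j → a = b ∧ i = j := by
    intro a b i j hi hj h
    apply hfree a b i j hi hj
    apply WithOne.coe_inj.mp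
    rw [coe_spow _ _ hi, coe_spow _ _ hj, h]
  have uniq : ∀ (x : S) (b : A) (jj : ℕ), 1 ≤ jj →
      (x : WithOne S) = (gen b : WithOne S) ^ jj → FB x = b ∧ LB x = jj :=
    fun x b jj hj hx => hfreeM (FB x) b (LB x) jj (hL1 x) hj ((hEq x).symm.trans hx)
  have memblock : ∀ (x : S) (b : A), x ∈ Nblock (gen b) ↔ FB x = b := by
    intro x b
    constructor
    · rintro ⟨i, hi1, hi2⟩
      have hxb : (x : WithOne S) = (gen b : WithOne S) ^ i := by
        rw [hi2]; exact coe_spow _ _ hi1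
      exact (uniq x b i hi1 hxb).1
    · rintro rfl
      exact ⟨LB x, hL1 x, hSEq x⟩
  have rho_iff : ∀ x y : S, rho gen x y ↔
      (FB x = FB y ∧ ∀ w : S, FB (x * w) = FB (y * w)) := by
    intro x y
    constructor
    · intro h
      constructor
      · obtain ⟨a, hx, hy⟩ := h 1
        rw [mul_one] at hx hy
        obtain ⟨x', hx', hxe⟩ := hx
        obtain ⟨y', hy', hye⟩ := hy
        have hx'' : x' = x := WithOne.coe_inj.mp hxe
        have hy'' : y' = y := WithOne.coe_inj.mp hye
        rw [hx''] at hx'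
        rw [hy''] at hy'
        rw [(memblock x a).mp hx', (memblock y a).mp hy']
      · intro w
        obtain ⟨a, hx, hy⟩ := h (w : WithOne S)
        obtain ⟨x', hx', hxe⟩ := hx
        obtain ⟨y', hy', hye⟩ := hy
        have hx'' : x' = x * w :=
          WithOne.coe_inj.mp (hxe.trans (WithOne.coe_mul x w).symm)
        have hy'' : y' = y * w :=
          WithOne.coe_inj.mp (hye.trans (WithOne.coe_mul y w).symm)
        rw [hx''] at hx'
        rw [hy''] at hy'
        rw [(memblock (x * w) a).mp hx', (memblock (y * w) a).mp hy']
    · rintro ⟨h1, h2⟩ z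
      induction z using WithOne.recOneCoe with
      | one =>
        refine ⟨FB x, ⟨x, (memblock x (FB x)).mpr rfl, by rw [mul_one]⟩,
          ⟨y, (memblock y (FB x)).mpr h1.symm, by rw [mul_one]⟩⟩
      | coe w =>
        refine ⟨FB (x * w), ⟨x * w, (memblock (x * w) _).mpr rfl, (WithOne.coe_mul x w).symm⟩,
          ⟨y * w, (memblock (y * w) _).mpr (h2 w).symm, (WithOne.coe_mul y w).symm⟩⟩
  have rho_refl : ∀ x, rho gen x x := fun x => (rho_iff x x).mpr ⟨rfl, fun _ => rfl⟩
  have rho_symm : ∀ x y, rho gen x y → rho gen y x := by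
    intro x y h
    obtain ⟨h1, h2⟩ := (rho_iff x y).mp h
    exact (rho_iff y x).mpr ⟨h1.symm, fun w => (h2 w).symm⟩
  have rho_trans : ∀ x y u, rho gen x y → rho gen y u → rho gen x u := by
    intro x y u h h'
    obtain ⟨h1, h2⟩ := (rho_iff x y).mp h
    obtain ⟨h1', h2'⟩ := (rho_iff y u).mp h'
    exact (rho_iff x u).mpr ⟨h1.trans h1', fun w => (h2 w).trans (h2' w)⟩
  have class_eq : ∀ x y, rho gen x y →
      {u : S | rho gen x u} = {u : S | rho gen y u} := by
    intro x y h
    ext u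
    constructor
    · intro hx
      exact rho_trans y x u (rho_symm x y h) hx
    · intro hy
      exact rho_trans x y u h hy
  have hletter : ∀ a : A, ∃ i j, 1 ≤ i ∧ i < j ∧
      ∀ z : S, FB (spow (gen a) i * z) = FB (spow (gen a) j * z) :=
    fun a => main_letter hfreeM hL1 hEq a
  choose I J hI1 hIJ hprop using hletter
  have elF : ∀ (a : A) (n : ℕ), 1 ≤ n → FB (spow (gen a) n) = a := by
    intro a n hn
    exact (uniq _ a n hn (coe_spow _ _ hn)).1
  have hpowrel : ∀ (a : A) (K : ℕ), I a ≤ K →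
      rho gen (spow (gen a) K) (spow (gen a) (K + (J a - I a))) := by
    intro a K hK
    have hK1 : 1 ≤ K := le_trans (hI1 a) hK
    have hKD1 : 1 ≤ K + (J a - I a) := by omega
    apply (rho_iff _ _).mpr
    constructor
    · rw [elF a K hK1, elF a _ hKD1]
    · intro w
      rcases Nat.eq_or_lt_of_le hK with heq | hlt
      · have e : K + (J a - I a) = J a := by have := hIJ a; omega
        rw [e]
        have hp := hprop a w
        rw [heq] at hp
        exact hp
      · have e1 : spow (gen a) K * w
            = spow (gen a) (I a) * (spow (gen a) (K - I a) * w) := by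
          conv_lhs => rw [show K = I a + (K - I a) by omega]
          rw [spow_add (gen a) (I a) (K - I a) (hI1 a) (by omega), mul_assoc]
        have e2 : spow (gen a) (K + (J a - I a)) * w
            = spow (gen a) (J a) * (spow (gen a) (K - I a) * w) := by
          conv_lhs => rw [show K + (J a - I a) = J a + (K - I a) by have := hIJ a; omega]
          rw [spow_add (gen a) (J a) (K - I a) (by have := hI1 a; have := hIJ a; omega) (by omega), mul_assoc]
        rw [e1, e2]
        exact hprop a (spow (gen a) (K - I a) * w)
  have hreduce : ∀ (a : A) (K : ℕ), 1 ≤ K → ∃ K', 1 ≤ K' ∧ K' ≤ J a ∧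
      rho gen (spow (gen a) K) (spow (gen a) K') := by
    intro a K
    induction K using Nat.strong_induction_on with
    | _ K ih =>
      intro hK1
      by_cases hle : K ≤ J a
      · exact ⟨K, hK1, hle, rho_refl _⟩
      · push_neg at hle
        set Dp := J a - I a with hDp
        have hDp1 : 1 ≤ Dp := by have := hIJ a; have := hI1 a; omega
        have hIa := hI1 a
        have hIJa := hIJ a
        have hrel := hpowrel a (K - Dp) (by omega)
        have e : (K - Dp) + Dp = K := by omega
        rw [e] at hrel
        obtain ⟨K', h1, h2, h3⟩ := ih (K - Dp) (by omega) (by omega)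
        exact ⟨K', h1, h2, rho_trans _ _ _ (rho_symm _ _ hrel) h3⟩
  letI : Fintype A := Fintype.ofFinite A
  set B := Finset.univ.sup J with hB
  have hJB : ∀ a, J a ≤ B := fun a => Finset.le_sup (Finset.mem_univ a)
  have hsub : {C : Set S | ∃ x : S, C = {y : S | rho gen x y}} ⊆
      (fun x : S => {y : S | rho gen x y}) ''
        ((fun p : A × ℕ => spow (gen p.1) p.2) '' (Set.univ ×ˢ Set.Icc 1 B)) := by
    rintro C ⟨x, rfl⟩
    obtain ⟨K', h1, h2, h3⟩ := hreduce (FB x) (LB x) (hL1 x)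
    rw [← hSEq x] at h3
    refine ⟨spow (gen (FB x)) K', ⟨(FB x, K'), ⟨Set.mem_univ _, ?_⟩, rfl⟩, ?_⟩
    · exact Set.mem_Icc.mpr ⟨h1, le_trans h2 (hJB (FB x))⟩
    · exact (class_eq x _ h3).symm

  apply Set.Finite.subset ?_ hsub
  apply Set.Finite.image
  apply Set.Finite.image
  exact Set.finite_univ.prod (Set.finite_Icc 1 B)

end Final
end Stmt13


theorem stmt13 {S : Type*} [Semigroup S] {A : Type*} [Finite A] (gen : A → S)
    (hcover : ∀ x : S, ∃ a : A, x ∈ Nblock (gen a))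
    (hfree : ∀ (a b : A) (i j : ℕ), 1 ≤ i → 1 ≤ j →
      spow (gen a) i = spow (gen b) j → a = b ∧ i = j) :
    {C : Set S | ∃ x : S, C = {y : S | rho gen x y}}.Finite := by
  exact Stmt13.final gen hcover hfree
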